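/- K_I = Σ_{J ≥ I} ((-1)^{ℓ(J)-ℓ(I)} / ℓ(J,I)) S^J, where the sum is over compositions J refining I, J decomposes as a concatenation J = J_1···J_r with J_p ⊨ i_p, and ℓ(J,I) = Π_p ℓ(J_p). -/

import Mathlib

/-- Polynomial binomial coefficient binom(x, k) for rational x. -/
def qchoose (x : ℚ) (k : ℕ) : ℚ :=
  (∏ j ∈ Finset.range k, (x - j)) / (Nat.factorial k : ℚ)

/-- S^I = S_{i_1} ⋯ S_{i_r} in the free algebra on the S_m. -/
noncomputable def SI {m : ℕ} (I : Composition m) : FreeAlgebra ℚ ℕ :=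
  (I.blocks.map (FreeAlgebra.ι ℚ)).prod

open Polynomial Finset

section Helpers

/-- expand a product of sums -/
lemma prod_ofFn_sum {M : Type} [Semiring M] :
    ∀ (n : ℕ) (κ : Fin n → Type) [∀ p, Fintype (κ p)] (g : ∀ p, κ p → M),
    (List.ofFn fun p => ∑ j : κ p, g p j).prod
      = ∑ L : (∀ p, κ p), (List.ofFn fun p => g p (L p)).prod := by
  intro n
  induction n with
  | zero =>
    intro κ _ g
    simp [List.ofFn_zero]
  | succ n ih =>
    intro κ _ g
    rw [List.ofFn_succ, List.prod_cons, ih (fun p => κ p.succ) (fun p j => g p.succ j),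
      Finset.sum_mul_sum]
    rw [← Fintype.sum_prod_type']
    apply Fintype.sum_equiv (Fin.consEquiv κ)
    intro ⟨j, L⟩
    simp [Fin.consEquiv, List.ofFn_succ]

lemma prod_ofFn_smul {M : Type} [Ring M] [Algebra ℚ M] :
    ∀ (n : ℕ) (c : Fin n → ℚ) (v : Fin n → M),
    (List.ofFn fun p => c p • v p).prod = (∏ p, c p) • (List.ofFn fun p => v p).prod := by
  intro n
  induction n with
  | zero => simp
  | succ n ih =>
    intro c v
    rw [List.ofFn_succ, List.prod_cons, ih (fun p => c p.succ) (fun p => v p.succ),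
      List.ofFn_succ, List.prod_cons, Fin.prod_univ_succ, smul_mul_assoc, mul_smul_comm,
      smul_smul]

lemma coeff_unique {V : Type} [AddCommGroup V] [Module ℚ V] (N : ℕ) (c d : ℕ → V)
    (h : ∀ x : ℚ, ∑ j ∈ Finset.range N, x ^ j • c j = ∑ j ∈ Finset.range N, x ^ j • d j)
    {j : ℕ} (hj : j ∈ Finset.range N) : c j = d j := by
  have key : ∀ w : ℕ → V, (∀ x : ℚ, ∑ j ∈ Finset.range N, x ^ j • w j = 0) →
      w j = 0 := by
    intro w hw
    let b := Module.Free.chooseBasis ℚ V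
    have : b.repr (w j) = 0 := by
      ext i
      set p : Polynomial ℚ := ∑ j ∈ Finset.range N, Polynomial.C (b.repr (w j) i) * X ^ j
        with hp
      have hpz : p = 0 := by
        apply Polynomial.funext
        intro x
        have := congrArg (fun v => b.repr v i) (hw x)
        have h2 : ∑ j ∈ Finset.range N, x ^ j * (b.repr (w j)) i = 0 := by
          simpa [map_sum, Finsupp.smul_apply, smul_eq_mul] using this
        rw [hp]
        simp only [eval_finset_sum, eval_mul, eval_C, eval_pow, eval_X, eval_zero]
        rw [← h2]
        exact Finset.sum_congr rfl fun j _ => mul_comm _ _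
      have := congrArg (fun q => Polynomial.coeff q j) hpz
      simpa [hp, Polynomial.coeff_X_pow, Finset.sum_ite_eq', hj] using this
    simpa using congrArg (b.repr.symm) this
  have := key (fun j => c j - d j) (by
    intro x
    simp only [smul_sub, Finset.sum_sub_distrib, h x, sub_self])
  rwa [sub_eq_zero] at this
noncomputable def qpoly (k : ℕ) : Polynomial ℚ :=
  Polynomial.C ((Nat.factorial k : ℚ)⁻¹) *
    ∏ j ∈ Finset.range k, (Polynomial.X - Polynomial.C (j : ℚ))

lemma qpoly_eval (x : ℚ) (k : ℕ) : (qpoly k).eval x = qchoose x k := by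
  rw [qchoose, div_eq_inv_mul, qpoly]
  simp [eval_prod]

lemma qpoly_natDegree (k : ℕ) : (qpoly k).natDegree ≤ k := by
  rw [qpoly]
  refine le_trans natDegree_mul_le ?_
  simp only [natDegree_C, zero_add]
  refine le_trans (natDegree_prod_le _ _) ?_
  refine le_trans (Finset.sum_le_sum (fun j _ => (natDegree_X_sub_C ((j:ℚ))).le)) ?_
  simp

noncomputable def rpoly (k : ℕ) : Polynomial ℚ :=
  Polynomial.C ((Nat.factorial k : ℚ)⁻¹) *
    ∏ j ∈ Finset.range (k - 1), (Polynomial.X - Polynomial.C ((j : ℚ) + 1))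

lemma qpoly_factor (k : ℕ) (hk : 0 < k) : qpoly k = X * rpoly k := by
  rcases k with _ | m
  · omega
  rw [qpoly, rpoly, Nat.succ_sub_one, Finset.prod_range_succ']
  simp only [Nat.cast_zero, map_zero, sub_zero, Nat.cast_add, Nat.cast_one]
  ring

lemma neg_prod (m : ℕ) : ∏ j ∈ Finset.range m, (-((j:ℚ) + 1)) = (-1) ^ m * m.factorial := by
  induction m with
  | zero => simp
  | succ m ih =>
    rw [Finset.prod_range_succ, ih, Nat.factorial_succ]
    push_cast
    ring

lemma rpoly_eval_zero (k : ℕ) (hk : 0 < k) :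
    (rpoly k).eval 0 = (-1 : ℚ) ^ (k - 1) / k := by
  rw [rpoly]
  simp only [eval_mul, eval_C, eval_prod, eval_sub, eval_X, eval_add, eval_one, zero_sub,
    neg_add]
  have : ∏ j ∈ Finset.range (k-1), (-(j:ℚ) + -1) = (-1)^(k-1) * (k-1).factorial := by
    rw [← neg_prod]
    exact Finset.prod_congr rfl fun j _ => by ring
  rw [this]
  obtain ⟨m, rfl⟩ := Nat.exists_eq_add_of_lt hk
  simp only [Nat.add_sub_cancel, Nat.factorial_succ]
  rw [div_eq_inv_mul]
  push_cast
  have h1 : ((m.factorial : ℚ)) ≠ 0 := Nat.cast_ne_zero.2 m.factorial_ne_zero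
  field_simp
lemma prod_qpoly_coeff (r : ℕ) (k : Fin r → ℕ) (hk : ∀ p, 0 < k p) :
    (∏ p, qpoly (k p)).coeff r
      = (-1 : ℚ) ^ ((∑ p, k p) - r) / (∏ p, (k p : ℚ)) := by
  have h1 : (∏ p, qpoly (k p)) = X ^ r * ∏ p, rpoly (k p) := by
    calc (∏ p, qpoly (k p)) = ∏ p, (X * rpoly (k p)) :=
          Finset.prod_congr rfl fun p _ => qpoly_factor _ (hk p)
      _ = (∏ _p : Fin r, X) * ∏ p, rpoly (k p) := by rw [Finset.prod_mul_distrib]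
      _ = X ^ r * ∏ p, rpoly (k p) := by simp
  rw [h1]
  have h2 : (X ^ r * ∏ p, rpoly (k p)).coeff r = (∏ p, rpoly (k p)).coeff 0 := by
    simpa using Polynomial.coeff_X_pow_mul (∏ p, rpoly (k p)) r 0
  rw [h2, Polynomial.coeff_zero_eq_eval_zero, eval_prod]
  have h3 : ∀ p : Fin r, (rpoly (k p)).eval 0 = (-1 : ℚ) ^ (k p - 1) / k p :=
    fun p => rpoly_eval_zero _ (hk p)
  rw [Finset.prod_congr rfl fun p _ => h3 p, Finset.prod_div_distrib,
    Finset.prod_pow_eq_pow_sum]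
  congr 2
  have : ∑ p, (k p - 1) + r = ∑ p, k p := by
    have : ∑ p : Fin r, (k p - 1) + ∑ _p : Fin r, 1 = ∑ p, k p := by
      rw [← Finset.sum_add_distrib]
      exact Finset.sum_congr rfl fun p _ => Nat.sub_add_cancel (hk p)
    simpa using this
  omega

end Helpers

theorem KI_expansion (n : ℕ) (hn : 0 < n) (I : Composition n)
    (Ψ : ℚ → (FreeAlgebra ℚ ℕ →ₐ[ℚ] FreeAlgebra ℚ ℕ))
    (hΨ : ∀ (x : ℚ) (m : ℕ), 0 < m → Ψ x (FreeAlgebra.ι ℚ m) =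
      ∑ H : Composition m, qchoose x H.length • SI H)
    (C : ℕ → FreeAlgebra ℚ ℕ)  -- C j = S^I * E^{[j]}
    (hC : ∀ x : ℚ, Ψ x (SI I) = ∑ j ∈ Finset.range (n + 1), x ^ j • C j) :
    C I.length =
      ∑ L : (∀ p : Fin I.blocks.length, Composition (I.blocks.get p)),
        (((-1 : ℚ) ^ ((∑ p, (L p).length) - I.length)) / (∏ p, ((L p).length : ℚ))) •
          (List.ofFn fun p => SI (L p)).prod := by
  classical
  set r := I.blocks.length with hr
  have hpos : ∀ p : Fin r, 0 < I.blocks.get p := fun p => I.blocks_pos (I.blocks.get_mem p)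
  -- abbreviations
  set v : (∀ p : Fin r, Composition (I.blocks.get p)) → FreeAlgebra ℚ ℕ :=
    fun L => (List.ofFn fun p => SI (L p)).prod with hv
  set P : (∀ p : Fin r, Composition (I.blocks.get p)) → Polynomial ℚ :=
    fun L => ∏ p, qpoly ((L p).length) with hP
  -- Step A
  have stepA : ∀ x : ℚ, Ψ x (SI I) = ∑ L, ((P L).eval x) • v L := by
    intro x
    have h0 : (List.ofFn fun p : Fin r => FreeAlgebra.ι ℚ (I.blocks.get p))
        = I.blocks.map (FreeAlgebra.ι ℚ) := by
      rw [show (fun p : Fin r => FreeAlgebra.ι ℚ (I.blocks.get p))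
          = (FreeAlgebra.ι ℚ) ∘ I.blocks.get from rfl, ← List.map_ofFn, List.ofFn_get]
    rw [SI, ← h0, map_list_prod, List.map_ofFn]
    have h1 : (⇑(Ψ x) ∘ fun p : Fin r => FreeAlgebra.ι ℚ (I.blocks.get p))
        = fun p : Fin r => ∑ H : Composition (I.blocks.get p), qchoose x H.length • SI H :=
      funext fun p => hΨ x _ (hpos p)
    rw [h1, prod_ofFn_sum r _ (fun p H => qchoose x H.length • SI H)]
    refine Finset.sum_congr rfl fun L _ => ?_
    rw [prod_ofFn_smul r (fun p => qchoose x (L p).length) (fun p => SI (L p))]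
    congr 1
    rw [hP, eval_prod]
    exact Finset.prod_congr rfl fun p _ => (qpoly_eval x _).symm
  -- Step B: degree bound
  have degP : ∀ L, (P L).natDegree < n + 1 := by
    intro L
    have h1 : (P L).natDegree ≤ ∑ p, (L p).length :=
      le_trans (natDegree_prod_le _ _)
        (Finset.sum_le_sum fun p _ => qpoly_natDegree _)
    have h2 : ∑ p, (L p).length ≤ ∑ p : Fin r, I.blocks.get p :=
      Finset.sum_le_sum fun p _ => (L p).length_le
    have h3 : ∑ p : Fin r, I.blocks.get p = n := by
      rw [← List.sum_ofFn, List.ofFn_get, I.blocks_sum]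
    omega
  -- Step C
  set D : ℕ → FreeAlgebra ℚ ℕ := fun j => ∑ L, ((P L).coeff j) • v L with hD
  have stepC : ∀ x : ℚ, ∑ j ∈ Finset.range (n + 1), x ^ j • C j
      = ∑ j ∈ Finset.range (n + 1), x ^ j • D j := by
    intro x
    rw [← hC x, stepA x]
    have : ∀ L, ((P L).eval x) • v L
        = ∑ j ∈ Finset.range (n + 1), x ^ j • (((P L).coeff j) • v L) := by
      intro L
      rw [Polynomial.eval_eq_sum_range' (degP L) x, Finset.sum_smul]
      exact Finset.sum_congr rfl fun j _ => by rw [mul_comm, mul_smul]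
    rw [Finset.sum_congr rfl fun L _ => this L, Finset.sum_comm]
    exact Finset.sum_congr rfl fun j _ => by rw [hD, Finset.smul_sum]
  -- Step D
  have hlen : I.length ∈ Finset.range (n + 1) :=
    Finset.mem_range.2 (Nat.lt_succ_of_le I.length_le)
  have hCD : C I.length = D I.length := coeff_unique (n + 1) C D stepC hlen
  -- Step E
  rw [hCD, hD]
  refine Finset.sum_congr rfl fun L _ => ?_
  congr 1
  have hkpos : ∀ p : Fin r, 0 < (L p).length :=
    fun p => (L p).length_pos_of_pos (hpos p)
  have := prod_qpoly_coeff r (fun p => (L p).length) hkpos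
  rw [hP]
  exact this
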